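/- Let d ≥ 1 be an integer, V a finite set of points in ℤ^d, and let s > 0, l > 0 and r ≥ 2 be real numbers with |V| > r^l·s. Let Ṽ ⊆ V be a nonempty (1/(3r^{1+l}))-approximation of V with respect to axis-parallel boxes. Let B be an axis-parallel box, and set V_1 = V ∩ B and Ṽ_1 = Ṽ ∩ B. If |Ṽ_1| ≥ (2/r^l)·|Ṽ|, then: (i) |V_1| > (5/(3r^l))·|V| > s; and (ii) Ṽ_1 is a (1/r)-approximation of V_1 with respect to axis-parallel boxes, i.e., for every axis-parallel box B', | |Ṽ_1 ∩ B'|/|Ṽ_1| − |V_1 ∩ B'|/|V_1| | ≤ 1/r. -/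

import Mathlib

/-- `X'` is an `ε`-approximation of the finite point set `X ⊂ ℤ^d` with respect to
axis-parallel boxes: for every axis-parallel box (given by integer lower and upper bounds
per coordinate, which suffices for sets of integer points), the relative counts of `X'`
and `X` inside the box differ by at most `ε`. -/
def IsBoxApprox (d : ℕ) (X X' : Finset (Fin d → ℤ)) (ε : ℝ) : Prop :=
  ∀ lo hi : Fin d → ℤ,
    |((X'.filter fun v => ∀ j : Fin d, lo j ≤ v j ∧ v j ≤ hi j).card : ℝ) /
        (X'.card : ℝ) -
      ((X.filter fun v => ∀ j : Fin d, lo j ≤ v j ∧ v j ≤ hi j).card : ℝ) /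
        (X.card : ℝ)| ≤ ε

/-- Abstract ratio perturbation lemma: if the "global" ratios `x, y` and the
"box" ratios `α, β` are `ε`-close, with `α ≥ c` and `y ≤ β`, then the
conditional ratios `x/α` and `y/β` are `2ε/c`-close. -/
lemma ratio_approx (x y α β ε c : ℝ) (hε : 0 < ε) (hc : 0 < c)
    (hxy : |x - y| ≤ ε) (hβα : |β - α| ≤ ε) (hα : c ≤ α) (hβ0 : 0 < β)
    (hy0 : 0 ≤ y) (hyβ : y ≤ β) :
    |x / α - y / β| ≤ ε / c + ε / c := by
  have hα0 : 0 < α := lt_of_lt_of_le hc hα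
  have hid : x / α - y / β = (x - y) / α + y * (β - α) / (α * β) := by
    field_simp
    ring
  have t1 : |x - y| / α ≤ ε / c := div_le_div₀ hε.le hxy hc hα
  have t2 : y * |β - α| / (α * β) ≤ ε / c := by
    have h1 : y * |β - α| ≤ β * ε := mul_le_mul hyβ hβα (abs_nonneg _) hβ0.le
    have h2 : y * |β - α| / (α * β) ≤ β * ε / (α * β) :=
      (div_le_div_iff_of_pos_right (mul_pos hα0 hβ0)).mpr h1
    have h3 : β * ε / (α * β) = ε / α := by
      field_simp
    have h4 : ε / α ≤ ε / c := div_le_div_of_nonneg_left hε.le hc hα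
    calc y * |β - α| / (α * β) ≤ β * ε / (α * β) := h2
      _ = ε / α := h3
      _ ≤ ε / c := h4
  calc |x / α - y / β| = |(x - y) / α + y * (β - α) / (α * β)| := by rw [hid]
    _ ≤ |(x - y) / α| + |y * (β - α) / (α * β)| := abs_add_le _ _
    _ = |x - y| / α + y * |β - α| / (α * β) := by
        rw [abs_div, abs_div, abs_mul, abs_of_nonneg hy0, abs_of_pos hα0,
          abs_of_pos (mul_pos hα0 hβ0)]
    _ ≤ ε / c + ε / c := add_le_add t1 t2

lemma div_ratio (a b c : ℝ) (hb : b ≠ 0) (hc : c ≠ 0) : a / b = a / c / (b / c) := by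
  field_simp

set_option maxHeartbeats 1000000 in
/-- Let `|V| > r^l·s` and let `Ṽ` be a `(1/(3r^{1+l}))`-approximation of
`V`. For an axis-parallel box `B`, set `V₁ = V ∩ B` and `Ṽ₁ = Ṽ ∩ B`. If
`|Ṽ₁| ≥ (2/r^l)·|Ṽ|`, then `|V₁| > (5/(3r^l))·|V| > s`, and `Ṽ₁` is a
`(1/r)`-approximation of `V₁`. -/
theorem nested_approximation (d : ℕ) (hd : 1 ≤ d)
    (V W : Finset (Fin d → ℤ)) (s l r : ℝ)
    (hs : 0 < s) (hl : 0 < l) (hr : 2 ≤ r)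
    (hVbig : r ^ l * s < (V.card : ℝ))
    (hWV : W ⊆ V) (hWne : W.Nonempty)
    (happrox : IsBoxApprox d V W (1 / (3 * r ^ (1 + l))))
    (lo hi : Fin d → ℤ) :
    ((W.filter fun v => ∀ j : Fin d, lo j ≤ v j ∧ v j ≤ hi j).card : ℝ) ≥
        2 / r ^ l * (W.card : ℝ) →
      (((V.filter fun v => ∀ j : Fin d, lo j ≤ v j ∧ v j ≤ hi j).card : ℝ) >
          5 / (3 * r ^ l) * (V.card : ℝ) ∧
        5 / (3 * r ^ l) * (V.card : ℝ) > s) ∧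
      IsBoxApprox d (V.filter fun v => ∀ j : Fin d, lo j ≤ v j ∧ v j ≤ hi j)
        (W.filter fun v => ∀ j : Fin d, lo j ≤ v j ∧ v j ≤ hi j) (1 / r) := by
  intro hW1
  have hr0 : (0:ℝ) < r := by linarith
  have hR : (0:ℝ) < r ^ l := Real.rpow_pos_of_pos hr0 l
  have hE : r ^ (1+l) = r * r ^ l := by
    rw [Real.rpow_add hr0, Real.rpow_one]
  have hWc : (0:ℝ) < (W.card : ℝ) := by exact_mod_cast Finset.card_pos.mpr hWne
  have hVc : (0:ℝ) < (V.card : ℝ) := by nlinarith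
  have hεeq : (1:ℝ) / (3 * r ^ (1+l)) = 1 / (3 * (r * r ^ l)) := by rw [hE]
  have hεpos : (0:ℝ) < 1 / (3 * (r * r ^ l)) := by positivity
  have hA := happrox lo hi
  rw [hεeq, abs_le] at hA
  have hα : 2 / r ^ l ≤
      ((W.filter fun v => ∀ j : Fin d, lo j ≤ v j ∧ v j ≤ hi j).card : ℝ) / (W.card : ℝ) :=
    (le_div_iff₀ hWc).mpr (by linarith)
  have hεb : (1:ℝ) / (3 * (r * r ^ l)) ≤ 1 / (6 * r ^ l) := by
    rw [div_le_div_iff₀ (by positivity) (by positivity)]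
    nlinarith
  have hsum : 2 / r ^ l - 1 / (6 * r ^ l) = 11 / (6 * r ^ l) := by
    field_simp
    ring
  have hβ : 11 / (6 * r ^ l) ≤
      ((V.filter fun v => ∀ j : Fin d, lo j ≤ v j ∧ v j ≤ hi j).card : ℝ) / (V.card : ℝ) := by
    linarith [hA.1]
  have hβ' : 11 / (6 * r ^ l) * (V.card : ℝ) ≤
      ((V.filter fun v => ∀ j : Fin d, lo j ≤ v j ∧ v j ≤ hi j).card : ℝ) :=
    (le_div_iff₀ hVc).mp hβ
  have h53 : 5 / (3 * r ^ l) < 11 / (6 * r ^ l) := by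
    rw [div_lt_div_iff₀ (by positivity) (by positivity)]
    nlinarith
  have hV1big : ((V.filter fun v => ∀ j : Fin d, lo j ≤ v j ∧ v j ≤ hi j).card : ℝ) >
      5 / (3 * r ^ l) * (V.card : ℝ) := by
    nlinarith
  have hV1pos : (0:ℝ) < ((V.filter fun v => ∀ j : Fin d, lo j ≤ v j ∧ v j ≤ hi j).card : ℝ) :=
    lt_trans (by positivity) hV1big
  have hW1pos : (0:ℝ) < ((W.filter fun v => ∀ j : Fin d, lo j ≤ v j ∧ v j ≤ hi j).card : ℝ) :=
    lt_of_lt_of_le (by positivity) hW1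
  refine ⟨⟨hV1big, ?_⟩, ?_⟩
  · have key : 5 / (3 * r ^ l) * (r ^ l * s) = 5 / 3 * s := by
      field_simp
    have h2 := mul_lt_mul_of_pos_left hVbig (show (0:ℝ) < 5 / (3 * r ^ l) by positivity)
    rw [key] at h2
    linarith
  · intro lo' hi'
    have hfilter : ∀ X : Finset (Fin d → ℤ),
        ((X.filter fun v => ∀ j : Fin d, lo j ≤ v j ∧ v j ≤ hi j).filter
            fun v => ∀ j : Fin d, lo' j ≤ v j ∧ v j ≤ hi' j)
          = X.filter fun v => ∀ j : Fin d,
              max (lo j) (lo' j) ≤ v j ∧ v j ≤ min (hi j) (hi' j) := by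
      intro X
      rw [Finset.filter_filter]
      apply Finset.filter_congr
      intro v _
      constructor
      · rintro ⟨h1, h2⟩ j
        exact ⟨max_le (h1 j).1 (h2 j).1, le_min (h1 j).2 (h2 j).2⟩
      · intro h
        exact ⟨fun j => ⟨le_trans (le_max_left _ _) (h j).1,
                 le_trans (h j).2 (min_le_left _ _)⟩,
               fun j => ⟨le_trans (le_max_right _ _) (h j).1,
                 le_trans (h j).2 (min_le_right _ _)⟩⟩
    rw [hfilter W, hfilter V]
    have hAB := happrox (fun j => max (lo j) (lo' j)) (fun j => min (hi j) (hi' j))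
    rw [hεeq, abs_le] at hAB
    have haWle : ((W.filter fun v => ∀ j : Fin d,
          max (lo j) (lo' j) ≤ v j ∧ v j ≤ min (hi j) (hi' j)).card : ℝ) ≤
        ((W.filter fun v => ∀ j : Fin d, lo j ≤ v j ∧ v j ≤ hi j).card : ℝ) := by
      rw [← hfilter W]
      exact_mod_cast Finset.card_le_card (Finset.filter_subset _ _)
    have haVle : ((V.filter fun v => ∀ j : Fin d,
          max (lo j) (lo' j) ≤ v j ∧ v j ≤ min (hi j) (hi' j)).card : ℝ) ≤
        ((V.filter fun v => ∀ j : Fin d, lo j ≤ v j ∧ v j ≤ hi j).card : ℝ) := by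
      rw [← hfilter V]
      exact_mod_cast Finset.card_le_card (Finset.filter_subset _ _)
    have e1 : ((W.filter fun v => ∀ j : Fin d,
          max (lo j) (lo' j) ≤ v j ∧ v j ≤ min (hi j) (hi' j)).card : ℝ) /
          ((W.filter fun v => ∀ j : Fin d, lo j ≤ v j ∧ v j ≤ hi j).card : ℝ) =
        (((W.filter fun v => ∀ j : Fin d,
          max (lo j) (lo' j) ≤ v j ∧ v j ≤ min (hi j) (hi' j)).card : ℝ) / (W.card : ℝ)) /
          (((W.filter fun v => ∀ j : Fin d, lo j ≤ v j ∧ v j ≤ hi j).card : ℝ) /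
            (W.card : ℝ)) := by
      exact div_ratio _ _ _ hW1pos.ne' hWc.ne'
    have e2 : ((V.filter fun v => ∀ j : Fin d,
          max (lo j) (lo' j) ≤ v j ∧ v j ≤ min (hi j) (hi' j)).card : ℝ) /
          ((V.filter fun v => ∀ j : Fin d, lo j ≤ v j ∧ v j ≤ hi j).card : ℝ) =
        (((V.filter fun v => ∀ j : Fin d,
          max (lo j) (lo' j) ≤ v j ∧ v j ≤ min (hi j) (hi' j)).card : ℝ) / (V.card : ℝ)) /
          (((V.filter fun v => ∀ j : Fin d, lo j ≤ v j ∧ v j ≤ hi j).card : ℝ) /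
            (V.card : ℝ)) := by
      exact div_ratio _ _ _ hV1pos.ne' hVc.ne'
    rw [e1, e2]
    have hmain := ratio_approx
      (((W.filter fun v => ∀ j : Fin d,
          max (lo j) (lo' j) ≤ v j ∧ v j ≤ min (hi j) (hi' j)).card : ℝ) / (W.card : ℝ))
      (((V.filter fun v => ∀ j : Fin d,
          max (lo j) (lo' j) ≤ v j ∧ v j ≤ min (hi j) (hi' j)).card : ℝ) / (V.card : ℝ))
      (((W.filter fun v => ∀ j : Fin d, lo j ≤ v j ∧ v j ≤ hi j).card : ℝ) / (W.card : ℝ))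
      (((V.filter fun v => ∀ j : Fin d, lo j ≤ v j ∧ v j ≤ hi j).card : ℝ) / (V.card : ℝ))
      (1 / (3 * (r * r ^ l))) (2 / r ^ l)
      hεpos (by positivity)
      (abs_le.mpr ⟨hAB.1, hAB.2⟩)
      (by rw [abs_sub_comm]; exact abs_le.mpr ⟨hA.1, hA.2⟩)
      hα (by positivity) (by positivity)
      ((div_le_div_iff_of_pos_right hVc).mpr haVle)
    refine le_trans hmain ?_
    have hq : (1:ℝ) / (3 * (r * r ^ l)) / (2 / r ^ l) = 1 / (6 * r) := by
      field_simp
      ring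
    rw [hq]
    have : (1:ℝ) / (6 * r) + 1 / (6 * r) = 1 / (3 * r) := by ring
    rw [this]
    rw [div_le_div_iff₀ (by positivity) hr0]
    nlinarith
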